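/- For d_1, d_2 ≥ 1 and s sufficiently large, there exists a surjective map of sheaves M_1^{⊕s} → M_{d_1} ⊕ M_{d_2} on P^n, where each summand M_1 → M_{d_1} ⊕ M_{d_2} is given by s ↦ (s·P_1, s·P_2) for a pair of polynomials P_i ∈ H^0(P^n, O(d_i − 1)). -/

import Mathlib

open MvPolynomial

noncomputable section Aux13

private lemma stmt13_sub_aeval_mem {n : ℕ} (f : Fin (n+1) → MvPolynomial (Fin (n+1)) ℂ)
    (p : MvPolynomial (Fin (n+1)) ℂ) :
    p - aeval f p ∈ Ideal.span (Set.range fun i => X i - f i) := by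
  induction p using MvPolynomial.induction_on with
  | C a => simp
  | add p q hp hq =>
      rw [map_add]
      have h : p + q - (aeval f p + aeval f q) = (p - aeval f p) + (q - aeval f q) := by ring
      rw [h]; exact add_mem hp hq
  | mul_X p i hp =>
      rw [map_mul, aeval_X]
      have h : p * X i - aeval f p * f i
          = (p - aeval f p) * X i + aeval f p * (X i - f i) := by ring
      rw [h]
      exact add_mem (Ideal.mul_mem_right _ _ hp)
        (Ideal.mul_mem_left _ _ (Ideal.subset_span ⟨i, rfl⟩))

private lemma stmt13_homogComp_mul {n : ℕ} (p q : MvPolynomial (Fin (n+1)) ℂ) (e m : ℕ)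
    (hq : q.IsHomogeneous e) :
    homogeneousComponent (m + e) (p * q) = homogeneousComponent m p * q := by
  induction p using MvPolynomial.induction_on' with
  | monomial σ a =>
      have hmono : (monomial σ a : MvPolynomial (Fin (n+1)) ℂ).IsHomogeneous σ.degree :=
        isHomogeneous_monomial _ rfl
      have hprod : ((monomial σ a : MvPolynomial (Fin (n+1)) ℂ) * q).IsHomogeneous (σ.degree + e) :=
        hmono.mul hq
      rw [homogeneousComponent_of_mem ((mem_homogeneousSubmodule _ _).2 hprod),
        homogeneousComponent_of_mem ((mem_homogeneousSubmodule _ _).2 hmono)]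
      by_cases h : σ.degree = m
      · rw [if_pos (by omega), if_pos h.symm]
      · rw [if_neg (by omega), if_neg (by omega), zero_mul]
  | add p1 p2 h1 h2 =>
      rw [add_mul, map_add, map_add, h1, h2, add_mul]

private lemma stmt13_key (n d : ℕ) (hd : 1 ≤ d) :
    ∃ (s : ℕ) (P : Fin s → MvPolynomial (Fin (n + 1)) ℂ),
      (∀ j, P j ∈ homogeneousSubmodule (Fin (n + 1)) ℂ (d - 1)) ∧
      ∀ (x : Fin (n + 1) → ℂ), x ≠ 0 →
        ∀ Q : MvPolynomial (Fin (n + 1)) ℂ,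
          Q ∈ homogeneousSubmodule (Fin (n + 1)) ℂ d → eval x Q = 0 →
          ∃ t : Fin s → MvPolynomial (Fin (n + 1)) ℂ,
            (∀ j, t j ∈ homogeneousSubmodule (Fin (n + 1)) ℂ 1 ∧ eval x (t j) = 0) ∧
            Q = ∑ j, t j * P j := by
  classical
  have hdeg : ∀ σ : Fin (n+1) →₀ ℕ, σ.degree = ∑ i, σ i := by
    intro σ
    rw [Finsupp.degree]
    exact Finset.sum_subset (Finset.subset_univ _)
      (fun i _ hi => Finsupp.notMem_support_iff.1 hi)
  set D : Finset (Fin (n+1) →₀ ℕ) :=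
    (Finset.Nat.antidiagonalTuple (n+1) (d-1)).image
      (fun f => Finsupp.equivFunOnFinite.symm f) with hD
  have hDmem : ∀ σ : Fin (n+1) →₀ ℕ, σ ∈ D ↔ σ.degree = d - 1 := by
    intro σ
    rw [hD, Finset.mem_image]
    constructor
    · rintro ⟨f, hf, rfl⟩
      rw [Finset.Nat.mem_antidiagonalTuple] at hf
      rw [hdeg]
      simpa using hf
    · intro hσ
      refine ⟨Finsupp.equivFunOnFinite σ, ?_, by simp⟩
      rw [Finset.Nat.mem_antidiagonalTuple]
      rw [hdeg] at hσ
      simpa using hσ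
  refine ⟨D.card, fun j => monomial ((D.equivFin.symm j) : Fin (n+1) →₀ ℕ) 1, ?_, ?_⟩
  · intro j
    exact (mem_homogeneousSubmodule _ _).2
      (isHomogeneous_monomial _ ((hDmem _).1 (D.equivFin.symm j).2))
  intro x hx Q hQ hQx
  obtain ⟨k, hk⟩ : ∃ k, x k ≠ 0 := by
    by_contra h
    push_neg at h
    exact hx (funext h)
  set y : Fin (n+1) → ℂ := fun i => x i / x k with hy
  set f : Fin (n+1) → MvPolynomial (Fin (n+1)) ℂ := fun i => C (y i) * X k with hf
  set ℓ : Fin (n+1) → MvPolynomial (Fin (n+1)) ℂ := fun i => X i - f i with hℓ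
  have hℓ_homog : ∀ i, (ℓ i).IsHomogeneous 1 := fun i =>
    (isHomogeneous_X _ _).sub ((isHomogeneous_X _ _).C_mul _)
  have hℓ_eval : ∀ i, eval x (ℓ i) = 0 := by
    intro i
    simp only [hℓ, hf, hy, map_sub, map_mul, eval_C, eval_X]
    field_simp
    simp
  have hQhom : Q.IsHomogeneous d := (mem_homogeneousSubmodule _ _).1 hQ
  obtain ⟨c, hc⟩ : ∃ c : ℂ, aeval f Q = C c * X k ^ d := by
    refine ⟨∑ σ ∈ Q.support, coeff σ Q * (σ.prod fun i e => y i ^ e), ?_⟩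
    conv_lhs => rw [← Q.support_sum_monomial_coeff]
    rw [map_sum, map_sum, Finset.sum_mul]
    refine Finset.sum_congr rfl fun σ hσ => ?_
    have hσd : σ.degree = d := by
      by_contra h
      exact (mem_support_iff.1 hσ) (hQhom.coeff_eq_zero h)
    rw [aeval_monomial, algebraMap_eq]
    have h2 : (σ.prod fun i e => f i ^ e) = C (σ.prod fun i e => y i ^ e) * X k ^ d := by
      rw [Finsupp.prod, Finsupp.prod]
      have h3 : ∀ i ∈ σ.support, f i ^ σ i = C (y i ^ σ i) * X k ^ σ i := by
        intro i _
        rw [hf, mul_pow, map_pow]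
      rw [Finset.prod_congr rfl h3, Finset.prod_mul_distrib, ← map_prod,
        Finset.prod_pow_eq_pow_sum]
      congr 1
      rw [← hσd, Finsupp.degree]
      rfl
    rw [h2, C_mul]
    ring
  have h0 : aeval f Q = 0 := by
    have h1 : eval x (aeval f Q) = eval x Q := by
      show eval x (bind₁ f Q) = eval x Q
      rw [eval, eval₂Hom_bind₁]
      refine eval₂Hom_congr rfl (funext fun i => ?_) rfl
      simp only [hf, hy, coe_eval₂Hom, eval₂_mul, eval₂_C, eval₂_X, RingHom.id_apply]
      field_simp
    rw [hc] at h1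
    simp only [map_mul, map_pow, eval_C, eval_X, hQx] at h1
    have hc0 : c = 0 := by
      rcases mul_eq_zero.1 h1 with h | h
      · exact h
      · exact absurd (pow_eq_zero_iff (by omega) |>.1 h) hk
    rw [hc, hc0]
    simp
  have hQspan : Q ∈ Ideal.span (Set.range ℓ) := by
    have h2 := stmt13_sub_aeval_mem f Q
    rw [h0, sub_zero] at h2
    exact h2
  obtain ⟨h, hh⟩ := Ideal.mem_span_range_iff_exists_fun.1 hQspan
  set g : Fin (n+1) → MvPolynomial (Fin (n+1)) ℂ :=
    fun i => homogeneousComponent (d-1) (h i) with hg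
  have hgh : ∀ i, (g i).IsHomogeneous (d-1) := fun i => homogeneousComponent_isHomogeneous _ _
  have hQg : Q = ∑ i, g i * ℓ i := by
    have h3 : Q = homogeneousComponent d Q := by
      rw [homogeneousComponent_of_mem hQ, if_pos rfl]
    conv_lhs => rw [h3, ← hh]
    rw [map_sum]
    refine Finset.sum_congr rfl fun i _ => ?_
    have hd1 : d = (d - 1) + 1 := by omega
    rw [hd1, stmt13_homogComp_mul _ _ _ _ (hℓ_homog i)]
  refine ⟨fun j => ∑ i, C (coeff ((D.equivFin.symm j) : Fin (n+1) →₀ ℕ) (g i)) * ℓ i, ?_, ?_⟩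
  · intro j
    constructor
    · exact Submodule.sum_mem _ fun i _ =>
        (mem_homogeneousSubmodule _ _).2 ((hℓ_homog i).C_mul _)
    · simp [hℓ_eval]
  · rw [hQg]
    rw [Finset.sum_congr rfl fun (j : Fin D.card) _ => Finset.sum_mul
      (f := fun i => C (coeff ((D.equivFin.symm j) : Fin (n+1) →₀ ℕ) (g i)) * ℓ i) ..]
    rw [Finset.sum_comm]
    refine Finset.sum_congr rfl fun i _ => ?_
    have hrw : ∀ j : Fin D.card,
        C (coeff ((D.equivFin.symm j) : Fin (n+1) →₀ ℕ) (g i)) * ℓ i *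
          monomial ((D.equivFin.symm j) : Fin (n+1) →₀ ℕ) 1
        = monomial ((D.equivFin.symm j) : Fin (n+1) →₀ ℕ)
            (coeff ((D.equivFin.symm j) : Fin (n+1) →₀ ℕ) (g i)) * ℓ i := by
      intro j
      rw [mul_right_comm, C_mul_monomial, mul_one]
    rw [Finset.sum_congr rfl fun j _ => hrw j, ← Finset.sum_mul]
    congr 1
    rw [Equiv.sum_comp D.equivFin.symm
      (fun σ : {z // z ∈ D} => monomial (σ : Fin (n+1) →₀ ℕ) (coeff (σ : Fin (n+1) →₀ ℕ) (g i)))]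
    rw [Finset.sum_coe_sort D (fun σ => monomial σ (coeff σ (g i)))]
    have hsub : (g i).support ⊆ D := by
      intro σ hσ
      rw [hDmem]
      by_contra hne
      exact (mem_support_iff.1 hσ) ((hgh i).coeff_eq_zero hne)
    exact (g i).support_sum_monomial_coeff.symm.trans
      (Finset.sum_subset hsub fun σ _ hσ => by
        rw [notMem_support_iff.1 hσ, monomial_zero])

end Aux13

/-- Lemma 2.5: For `d₁, d₂ ≥ 1` there are `s` and pairs of polynomials
`P₁ⱼ ∈ H⁰(ℙⁿ, O(d₁−1))`, `P₂ⱼ ∈ H⁰(ℙⁿ, O(d₂−1))` so that the induced map of sheaves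
`M₁^{⊕s} → M_{d₁} ⊕ M_{d₂}`, whose `j`-th component is `t ↦ (t·P₁ⱼ, t·P₂ⱼ)`, is
surjective.  Surjectivity is expressed on fibers: the fiber of `M_d` at a point
`x ≠ 0` of `𝔸^{n+1} \ 0` is the space of degree-`d` forms vanishing at `x`, and every
pair `(Q₁, Q₂)` of such forms is `(∑ tⱼ P₁ⱼ, ∑ tⱼ P₂ⱼ)` for linear forms `tⱼ`
vanishing at `x`. -/
theorem stmt_13 (n d1 d2 : ℕ) (hd1 : 1 ≤ d1) (hd2 : 1 ≤ d2) :
    ∃ (s : ℕ) (P1 P2 : Fin s → MvPolynomial (Fin (n + 1)) ℂ),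
      (∀ j, P1 j ∈ homogeneousSubmodule (Fin (n + 1)) ℂ (d1 - 1)) ∧
      (∀ j, P2 j ∈ homogeneousSubmodule (Fin (n + 1)) ℂ (d2 - 1)) ∧
      ∀ (x : Fin (n + 1) → ℂ), x ≠ 0 →
        ∀ Q1 Q2 : MvPolynomial (Fin (n + 1)) ℂ,
          Q1 ∈ homogeneousSubmodule (Fin (n + 1)) ℂ d1 → eval x Q1 = 0 →
          Q2 ∈ homogeneousSubmodule (Fin (n + 1)) ℂ d2 → eval x Q2 = 0 →
          ∃ t : Fin s → MvPolynomial (Fin (n + 1)) ℂ,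
            (∀ j, t j ∈ homogeneousSubmodule (Fin (n + 1)) ℂ 1 ∧ eval x (t j) = 0) ∧
            Q1 = ∑ j, t j * P1 j ∧ Q2 = ∑ j, t j * P2 j := by
  obtain ⟨s1, P, hP, hPkey⟩ := stmt13_key n d1 hd1
  obtain ⟨s2, P', hP', hPkey'⟩ := stmt13_key n d2 hd2
  refine ⟨s1 + s2, Fin.append P (fun _ => (0 : MvPolynomial (Fin (n+1)) ℂ)),
    Fin.append (fun _ => (0 : MvPolynomial (Fin (n+1)) ℂ)) P', ?_, ?_, ?_⟩
  · intro j
    refine Fin.addCases (fun i => ?_) (fun i => ?_) j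
    · rw [Fin.append_left]; exact hP i
    · rw [Fin.append_right]; exact Submodule.zero_mem _
  · intro j
    refine Fin.addCases (fun i => ?_) (fun i => ?_) j
    · rw [Fin.append_left]; exact Submodule.zero_mem _
    · rw [Fin.append_right]; exact hP' i
  intro x hx Q1 Q2 hQ1 hQ1x hQ2 hQ2x
  obtain ⟨t1, ht1, ht1sum⟩ := hPkey x hx Q1 hQ1 hQ1x
  obtain ⟨t2, ht2, ht2sum⟩ := hPkey' x hx Q2 hQ2 hQ2x
  refine ⟨Fin.append t1 t2, ?_, ?_, ?_⟩
  · intro j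
    refine Fin.addCases (fun i => ?_) (fun i => ?_) j
    · rw [Fin.append_left]; exact ht1 i
    · rw [Fin.append_right]; exact ht2 i
  · rw [Fin.sum_univ_add]
    have h1 : ∀ i : Fin s1,
        Fin.append t1 t2 (Fin.castAdd s2 i) * Fin.append P (fun _ => (0 : MvPolynomial (Fin (n+1)) ℂ)) (Fin.castAdd s2 i) = t1 i * P i := by
      intro i; rw [Fin.append_left, Fin.append_left]
    have h2 : ∀ i : Fin s2,
        Fin.append t1 t2 (Fin.natAdd s1 i) * Fin.append P (fun _ => (0 : MvPolynomial (Fin (n+1)) ℂ)) (Fin.natAdd s1 i) = 0 := by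
      intro i; rw [Fin.append_right, Fin.append_right]; exact mul_zero _
    rw [Finset.sum_congr rfl fun i _ => h1 i, Finset.sum_congr rfl fun i _ => h2 i]
    rw [Finset.sum_const_zero, add_zero]
    exact ht1sum
  · rw [Fin.sum_univ_add]
    have h1 : ∀ i : Fin s1,
        Fin.append t1 t2 (Fin.castAdd s2 i) * Fin.append (fun _ => (0 : MvPolynomial (Fin (n+1)) ℂ)) P' (Fin.castAdd s2 i) = 0 := by
      intro i; rw [Fin.append_left, Fin.append_left]; exact mul_zero _
    have h2 : ∀ i : Fin s2,
        Fin.append t1 t2 (Fin.natAdd s1 i) * Fin.append (fun _ => (0 : MvPolynomial (Fin (n+1)) ℂ)) P' (Fin.natAdd s1 i) = t2 i * P' i := by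
      intro i; rw [Fin.append_right, Fin.append_right]
    rw [Finset.sum_congr rfl fun i _ => h1 i, Finset.sum_congr rfl fun i _ => h2 i]
    rw [Finset.sum_const_zero, zero_add]
    exact ht2sum
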